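/- Let G be a group, let A and B be subgroups of G, and let φ : A → B be an isomorphism. If A ≠ G and B ≠ G, then the HNN extension G*_φ = ⟨G, t | t a t⁻¹ = φ(a) for all a ∈ A⟩ contains a non-abelian free subgroup; that is, there exists an injective group homomorphism from the free group of rank 2 into G*_φ. -/

import Mathlib

open HNNExtension

namespace HNNFreeAux

variable {G : Type} [Group G] (A B : Subgroup G) (φ : A ≃* B)

/-- A group is not the union of two proper subgroups. -/
lemma exists_not_mem_union (hA : A ≠ ⊤) (hB : B ≠ ⊤) :
    ∃ c : G, c ∉ A ∧ c ∉ B := by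
  obtain ⟨a, ha⟩ : ∃ a : G, a ∉ A := by
    by_contra h; push_neg at h; exact hA (Subgroup.eq_top_iff' A |>.2 h)
  obtain ⟨b, hb⟩ : ∃ b : G, b ∉ B := by
    by_contra h; push_neg at h; exact hB (Subgroup.eq_top_iff' B |>.2 h)
  by_cases haB : a ∈ B
  · by_cases hbA : b ∈ A
    · refine ⟨a * b, fun h => ha ?_, fun h => hb ?_⟩
      · have := mul_mem h (inv_mem hbA); simpa using this
      · have := mul_mem (inv_mem haB) h; simpa using this
    · exact ⟨b, hbA, hb⟩
  · exact ⟨a, ha, haB⟩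

variable (c : G)

/-- element of `G` preceding the `t`-power for a letter -/
def pre (ℓ : Fin 2 × Bool) : G := if ℓ.1 = 0 then 1 else c

/-- element of `G` following the `t`-power for a letter -/
def post (ℓ : Fin 2 × Bool) : G := if ℓ.1 = 0 then 1 else c⁻¹

/-- the sign of the `t`-power for a letter -/
def sgn (ℓ : Fin 2 × Bool) : ℤˣ := if ℓ.2 then 1 else -1

/-- head of the reduced word built from a list of letters -/
def headPre : List (Fin 2 × Bool) → G
  | [] => 1
  | ℓ :: _ => pre c ℓ

/-- list part of the reduced word built from a list of letters -/
def mkList : List (Fin 2 × Bool) → List (ℤˣ × G)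
  | [] => []
  | ℓ :: rest => (sgn ℓ, post c ℓ * headPre c rest) :: mkList rest

lemma mkList_ne_nil {L : List (Fin 2 × Bool)} (h : L ≠ []) : mkList c L ≠ [] := by
  cases L with
  | nil => exact absurd rfl h
  | cons ℓ rest => simp [mkList]

/-- the two generators -/
def gens : Fin 2 → HNNExtension G A B φ := ![t, of c * t * (of c)⁻¹]

lemma letter_eq (ℓ : Fin 2 × Bool) :
    of (pre c ℓ) * (t : HNNExtension G A B φ) ^ ((sgn ℓ : ℤˣ) : ℤ) * of (post c ℓ) =
      cond ℓ.2 (gens A B φ c ℓ.1) (gens A B φ c ℓ.1)⁻¹ := by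
  obtain ⟨i, b⟩ := ℓ
  fin_cases i <;> cases b <;>
    simp [pre, post, sgn, gens, mul_assoc, map_inv]

lemma prod_eq (L : List (Fin 2 × Bool)) :
    of (headPre c L) *
      ((mkList c L).map (fun x => (t : HNNExtension G A B φ) ^ ((x.1 : ℤˣ) : ℤ) * of x.2)).prod =
      (L.map fun x => cond x.2 (gens A B φ c x.1) (gens A B φ c x.1)⁻¹).prod := by
  induction L with
  | nil => simp [headPre, mkList]
  | cons ℓ rest ih =>
    rw [List.map_cons, List.prod_cons, ← ih]
    show of (headPre c (ℓ :: rest)) *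
      ((t ^ ((sgn ℓ : ℤˣ) : ℤ) * of (post c ℓ * headPre c rest)) *
        ((mkList c rest).map _).prod) = _
    rw [← letter_eq A B φ c ℓ]
    simp [headPre, map_mul, mul_assoc]

lemma notin_toSubgroup (hcA : c ∉ A) (hcB : c ∉ B) (u : ℤˣ) :
    c ∉ toSubgroup A B u ∧ c⁻¹ ∉ toSubgroup A B u := by
  rcases Int.units_eq_one_or u with rfl | rfl
  · exact ⟨hcA, fun h => hcA (by simpa using inv_mem h)⟩
  · exact ⟨hcB, fun h => hcB (by simpa using inv_mem h)⟩

lemma chain_mkList (hcA : c ∉ A) (hcB : c ∉ B) :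
    ∀ L : List (Fin 2 × Bool),
      List.Chain' (fun p q : Fin 2 × Bool => p.1 = q.1 → q.2 = p.2) L →
      List.Chain' (fun a b : ℤˣ × G => a.2 ∈ toSubgroup A B a.1 → a.1 = b.1) (mkList c L)
  | [] => fun _ => List.isChain_nil
  | [ℓ] => fun _ => List.isChain_singleton _
  | ℓ :: ℓ' :: rest => fun h => by
    replace h := List.isChain_cons_cons.1 h
    refine List.isChain_cons_cons.2 ⟨?_, chain_mkList hcA hcB (ℓ' :: rest) h.2⟩
    show post c ℓ * headPre c (ℓ' :: rest) ∈ toSubgroup A B (sgn ℓ) → sgn ℓ = sgn ℓ'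
    by_cases hii : ℓ.1 = ℓ'.1
    · intro _; rw [sgn, sgn, h.1 hii]
    · intro hmem
      exfalso
      have h2 : headPre c (ℓ' :: rest) = pre c ℓ' := rfl
      have h2' : headPre c (ℓ' :: rest) = pre c ℓ' := rfl
      rw [h2'] at hmem
      obtain ⟨i, b⟩ := ℓ
      obtain ⟨i', b'⟩ := ℓ'
      simp only at hii
      fin_cases i <;> fin_cases i' <;> first
        | exact hii rfl
        | exact (notin_toSubgroup A B c hcA hcB _).1
            (by simpa [post, pre] using hmem)
        | exact (notin_toSubgroup A B c hcA hcB _).2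
            (by simpa [post, pre] using hmem)

/-- reduced words in the free group have the no-cancellation chain property -/
lemma chain_toWord : ∀ (L : List (Fin 2 × Bool)),
    (∀ (L₂ L₃ : List (Fin 2 × Bool)) (x : Fin 2) (b : Bool),
      L ≠ L₂ ++ (x, b) :: (x, !b) :: L₃) →
    List.Chain' (fun p q : Fin 2 × Bool => p.1 = q.1 → q.2 = p.2) L
  | [] => fun _ => List.isChain_nil
  | [ℓ] => fun _ => List.isChain_singleton _
  | ℓ :: ℓ' :: rest => fun h => by
    refine List.isChain_cons_cons.2 ⟨?_, chain_toWord (ℓ' :: rest)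
      (fun L₂ L₃ x b hEq => h (ℓ :: L₂) L₃ x b (by rw [hEq]; rfl))⟩
    intro hii
    by_contra hbb
    have : ℓ'.2 = !ℓ.2 := by
      cases hb : ℓ.2 <;> cases hb' : ℓ'.2 <;> simp_all
    have h3 : ℓ' = (ℓ.1, !ℓ.2) := Prod.ext hii.symm this
    exact h [] rest ℓ.1 ℓ.2 (by rw [← h3]; rfl)

end HNNFreeAux

/-- If `A` and `B` are proper subgroups of a group `G` and `φ : A ≃* B` is an isomorphism,
then the HNN extension `G*_φ = ⟨G, t | t a t⁻¹ = φ(a) for a ∈ A⟩` contains a non-abelian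
free subgroup: there is an injective homomorphism from the free group of rank `2`
into `G*_φ`. -/
theorem hnn_extension_contains_nonabelian_free_subgroup
    {G : Type} [Group G] (A B : Subgroup G) (φ : A ≃* B)
    (hA : A ≠ ⊤) (hB : B ≠ ⊤) :
    ∃ f : FreeGroup (Fin 2) →* HNNExtension G A B φ, Function.Injective f := by
  classical
  obtain ⟨c, hcA, hcB⟩ := HNNFreeAux.exists_not_mem_union A B hA hB
  refine ⟨FreeGroup.lift (HNNFreeAux.gens A B φ c), ?_⟩
  rw [injective_iff_map_eq_one]
  intro w hw
  by_contra hw1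
  -- build the reduced word
  set L := w.toWord with hL
  have hLne : L ≠ [] := fun h => hw1 (FreeGroup.toWord_eq_nil_iff.1 h)
  have hred : ∀ (L₂ L₃ : List (Fin 2 × Bool)) (x : Fin 2) (b : Bool),
      L ≠ L₂ ++ (x, b) :: (x, !b) :: L₃ := by
    intro L₂ L₃ x b hEq
    have : FreeGroup.reduce L = L := FreeGroup.reduce_toWord w
    rw [hEq] at this
    exact FreeGroup.reduce.not this
  have hchain := HNNFreeAux.chain_toWord L hred
  let rw : HNNExtension.NormalWord.ReducedWord G A B :=
    { head := HNNFreeAux.headPre c L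
      toList := HNNFreeAux.mkList c L
      chain := HNNFreeAux.chain_mkList A B c hcA hcB L hchain }
  have hprod : rw.prod φ = FreeGroup.lift (HNNFreeAux.gens A B φ c) w := by
    conv_rhs => rw [← FreeGroup.mk_toWord (x := w)]
    rw [FreeGroup.lift_mk]
    exact HNNFreeAux.prod_eq A B φ c L
  have hmem : rw.prod φ ∈ (HNNExtension.of.range : Subgroup (HNNExtension G A B φ)) := by
    rw [hprod, hw]
    exact one_mem _
  have := HNNExtension.ReducedWord.toList_eq_nil_of_mem_of_range φ rw hmem
  exact HNNFreeAux.mkList_ne_nil c hLne this
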